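/- Let A and B be irreducible non-permutation {0,1}-matrices, and let h: X_A → X_B be a homeomorphism giving rise to a continuous orbit equivalence with continuous functions k_1, l_1: X_A → ℤ_{≥0} and cocycle function c_1 = l_1 − k_1. If x ∈ X_A and r, s ∈ ℤ_{≥0} satisfy σ_A^r(x) = σ_A^s(x) and r − s > 0, then Σ_{i=0}^{r−s−1} c_1(σ_A^{s+i}(x)) > 0. -/

import Mathlib

/-- The group structure on self-homeomorphisms, with `(f * g) x = f (g x)`. -/
instance homeoGroup {X : Type*} [TopologicalSpace X] : Group (X ≃ₜ X) where
  mul f g := g.trans f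
  one := Homeomorph.refl X
  inv := Homeomorph.symm
  mul_assoc _ _ _ := Homeomorph.ext fun _ => rfl
  one_mul _ := Homeomorph.ext fun _ => rfl
  mul_one _ := Homeomorph.ext fun _ => rfl
  inv_mul_cancel f := Homeomorph.ext f.symm_apply_apply

private lemma iter_swap {α : Type*} (f : α → α) (a b : ℕ) (x : α) :
    f^[a] (f^[b] x) = f^[b] (f^[a] x) := by
  rw [← Function.iterate_add_apply, ← Function.iterate_add_apply, add_comm]

/-- The one-sided topological Markov shift space `X_A` of a 0-1 matrix `A`. -/
def MarkovShift {N : ℕ} (A : Matrix (Fin N) (Fin N) ℕ) : Set (ℕ → Fin N) :=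
  {x | ∀ n, A (x n) (x (n + 1)) = 1}

/-- The shift transformation `σ_A` on `X_A`. -/
def shift {N : ℕ} (A : Matrix (Fin N) (Fin N) ℕ) :
    ↥(MarkovShift A) → ↥(MarkovShift A) :=
  fun x => ⟨fun n => x.1 (n + 1), fun n => x.2 (n + 1)⟩

/-- `A` is a {0,1}-matrix which is irreducible and not a permutation matrix. -/
structure IsIrredNonPerm {N : ℕ} (A : Matrix (Fin N) (Fin N) ℕ) : Prop where
  zero_one : ∀ i j, A i j = 0 ∨ A i j = 1
  irreducible : ∀ i j, ∃ n, 1 ≤ n ∧ 0 < (A ^ n) i j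
  not_perm : ¬ ∃ e : Equiv.Perm (Fin N), ∀ i j, A i j = if e i = j then 1 else 0

/-- The continuous full group `Γ_A`. -/
def fullGroup {N : ℕ} (A : Matrix (Fin N) (Fin N) ℕ) :
    Subgroup (↥(MarkovShift A) ≃ₜ ↥(MarkovShift A)) where
  carrier := {τ | ∃ k l : ↥(MarkovShift A) → ℕ, Continuous k ∧ Continuous l ∧
      ∀ x, (shift A)^[k x] (τ x) = (shift A)^[l x] x}
  one_mem' := ⟨fun _ => 0, fun _ => 0, continuous_const, continuous_const, fun _ => rfl⟩
  mul_mem' := by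
    rintro τ₁ τ₂ ⟨k, l, hk, hl, hrel⟩ ⟨k', l', hk', hl', hrel'⟩
    refine ⟨fun x => k (τ₂ x) + k' x, fun x => l (τ₂ x) + l' x,
      (hk.comp τ₂.continuous).add hk', (hl.comp τ₂.continuous).add hl', fun x => ?_⟩
    show (shift A)^[k (τ₂ x) + k' x] (τ₁ (τ₂ x)) = (shift A)^[l (τ₂ x) + l' x] x
    rw [add_comm (k (τ₂ x)) (k' x), Function.iterate_add_apply, hrel (τ₂ x), iter_swap,
      hrel' x, ← Function.iterate_add_apply]
  inv_mem' := by
    rintro τ ⟨k, l, hk, hl, hrel⟩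
    refine ⟨fun x => l (τ.symm x), fun x => k (τ.symm x),
      hl.comp τ.symm.continuous, hk.comp τ.symm.continuous, fun x => ?_⟩
    show (shift A)^[l (τ.symm x)] (τ.symm x) = (shift A)^[k (τ.symm x)] x
    have h0 := hrel (τ.symm x)
    rw [τ.apply_symm_apply] at h0
    exact h0.symm

/-- The subgroup `Γ_A^{AF}` of the continuous full group. -/
def afGroup {N : ℕ} (A : Matrix (Fin N) (Fin N) ℕ) :
    Subgroup (↥(MarkovShift A) ≃ₜ ↥(MarkovShift A)) where
  carrier := {τ | ∃ K : ℕ, ∀ x, (shift A)^[K] (τ x) = (shift A)^[K] x}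
  one_mem' := ⟨0, fun _ => rfl⟩
  mul_mem' := by
    rintro τ₁ τ₂ ⟨K, hK⟩ ⟨K', hK'⟩
    refine ⟨K' + K, fun x => ?_⟩
    show (shift A)^[K' + K] (τ₁ (τ₂ x)) = (shift A)^[K' + K] x
    rw [Function.iterate_add_apply, hK (τ₂ x), iter_swap, hK' x, iter_swap,
      ← Function.iterate_add_apply]
  inv_mem' := by
    rintro τ ⟨K, hK⟩
    refine ⟨K, fun x => ?_⟩
    show (shift A)^[K] (τ.symm x) = (shift A)^[K] x
    have h0 := hK (τ.symm x)
    rw [τ.apply_symm_apply] at h0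
    exact h0.symm

/-- `h`, together with `k₁, l₁, k₂, l₂`, witnesses a continuous orbit equivalence
between `(X_A, σ_A)` and `(X_B, σ_B)`. -/
def COEWitness {N M : ℕ} (A : Matrix (Fin N) (Fin N) ℕ) (B : Matrix (Fin M) (Fin M) ℕ)
    (h : ↥(MarkovShift A) ≃ₜ ↥(MarkovShift B)) (k₁ l₁ : ↥(MarkovShift A) → ℕ)
    (k₂ l₂ : ↥(MarkovShift B) → ℕ) : Prop :=
  Continuous k₁ ∧ Continuous l₁ ∧ Continuous k₂ ∧ Continuous l₂ ∧
  (∀ x, (shift B)^[k₁ x] (h (shift A x)) = (shift B)^[l₁ x] (h x)) ∧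
  (∀ y, (shift A)^[k₂ y] (h.symm (shift B y)) = (shift A)^[l₂ y] (h.symm y))

/-- `(X_A, σ_A)` and `(X_B, σ_B)` are continuously orbit equivalent. -/
def COE {N M : ℕ} (A : Matrix (Fin N) (Fin N) ℕ) (B : Matrix (Fin M) (Fin M) ℕ) : Prop :=
  ∃ h k₁ l₁ k₂ l₂, COEWitness A B h k₁ l₁ k₂ l₂

/-- The extra uniformity condition on a homeomorphism `h : X_A → X_B`:
elements of `Γ_A^{AF}` and `Γ_B^{AF}` are uniformly intertwined by `h`. -/
def UniformWitness {N M : ℕ} (A : Matrix (Fin N) (Fin N) ℕ) (B : Matrix (Fin M) (Fin M) ℕ)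
    (h : ↥(MarkovShift A) ≃ₜ ↥(MarkovShift B)) : Prop :=
  (∀ τ₁ ∈ afGroup A, ∃ K : ℕ, ∀ x, (shift B)^[K] (h (τ₁ x)) = (shift B)^[K] (h x)) ∧
  (∀ τ₂ ∈ afGroup B, ∃ K : ℕ, ∀ y, (shift A)^[K] (h.symm (τ₂ y)) = (shift A)^[K] (h.symm y))

/-- `(X_A, σ_A)` and `(X_B, σ_B)` are uniformly continuously orbit equivalent. -/
def UCOE {N M : ℕ} (A : Matrix (Fin N) (Fin N) ℕ) (B : Matrix (Fin M) (Fin M) ℕ) : Prop :=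
  ∃ h k₁ l₁ k₂ l₂, COEWitness A B h k₁ l₁ k₂ l₂ ∧ UniformWitness A B h

/-- `(X_A, σ_A)` and `(X_B, σ_B)` are uniformly orbit equivalent. -/
def UOE {N M : ℕ} (A : Matrix (Fin N) (Fin N) ℕ) (B : Matrix (Fin M) (Fin M) ℕ) : Prop :=
  ∃ h : ↥(MarkovShift A) ≃ₜ ↥(MarkovShift B), UniformWitness A B h

/-- `(X_A, σ_A)` and `(X_B, σ_B)` are eventually one-sided conjugate. -/
def EventuallyConjugate {N M : ℕ} (A : Matrix (Fin N) (Fin N) ℕ)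
    (B : Matrix (Fin M) (Fin M) ℕ) : Prop :=
  ∃ (h : ↥(MarkovShift A) ≃ₜ ↥(MarkovShift B)) (K₁ K₂ : ℕ),
    (∀ x, (shift B)^[K₁] (h (shift A x)) = (shift B)^[K₁ + 1] (h x)) ∧
    (∀ y, (shift A)^[K₂] (h.symm (shift B y)) = (shift A)^[K₂ + 1] (h.symm y))

/-- Conjugation of a self-homeomorphism of `X_A` by `h : X_A ≃ₜ X_B`,
i.e. `h ∘ τ ∘ h⁻¹`. -/
def conjHomeo {N M : ℕ} {A : Matrix (Fin N) (Fin N) ℕ} {B : Matrix (Fin M) (Fin M) ℕ}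
    (h : ↥(MarkovShift A) ≃ₜ ↥(MarkovShift B))
    (τ : ↥(MarkovShift A) ≃ₜ ↥(MarkovShift A)) : ↥(MarkovShift B) ≃ₜ ↥(MarkovShift B) :=
  (h.symm.trans τ).trans h

/-- A point `x ∈ X_A` is eventually periodic. -/
def EventuallyPeriodicPt {N : ℕ} (A : Matrix (Fin N) (Fin N) ℕ)
    (x : ↥(MarkovShift A)) : Prop :=
  ∃ r s : ℕ, s < r ∧ (shift A)^[r] x = (shift A)^[s] x

/-- `f^k(x) = Σ_{i=0}^{k-1} f(σ_A^i(x))`. -/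
def cocycleSum {N : ℕ} (A : Matrix (Fin N) (Fin N) ℕ) (f : ↥(MarkovShift A) → ℕ)
    (k : ℕ) (x : ↥(MarkovShift A)) : ℕ :=
  ∑ i ∈ Finset.range k, f ((shift A)^[i] x)

section MyAux

variable {N : ℕ} {A : Matrix (Fin N) (Fin N) ℕ}

private lemma shift_coord (u : ↥(MarkovShift A)) (n i : ℕ) :
    ((shift A)^[n] u).1 i = u.1 (i + n) := by
  induction n generalizing u with
  | zero => rfl
  | succ n ih =>
    rw [Function.iterate_succ_apply, ih]
    rfl

private lemma pt_ext {u w : ↥(MarkovShift A)} (hc : ∀ i, u.1 i = w.1 i) : u = w :=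
  Subtype.ext (funext hc)

private lemma cyl_lemma {α : Type*} [TopologicalSpace α] [DiscreteTopology α]
    (γ : ↥(MarkovShift A) → α) (hγ : Continuous γ) (w : ↥(MarkovShift A)) :
    ∃ t, ∀ u : ↥(MarkovShift A), (∀ i < t, u.1 i = w.1 i) → γ u = γ w := by
  have hopen : IsOpen (γ ⁻¹' {γ w}) := (isOpen_discrete _).preimage hγ
  rw [isOpen_induced_iff] at hopen
  obtain ⟨V, hV, hVeq⟩ := hopen
  have hwV : (w : ℕ → Fin N) ∈ V := by
    have : w ∈ Subtype.val ⁻¹' V := by rw [hVeq]; exact rfl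
    exact this
  obtain ⟨I, U, hU, hsub⟩ := isOpen_pi_iff.mp hV _ hwV
  refine ⟨I.sup id + 1, fun u hu => ?_⟩
  have hmem : (u : ℕ → Fin N) ∈ (↑I : Set ℕ).pi U := by
    intro i hi
    have hi' : i ∈ I := hi
    rw [hu i (Nat.lt_succ_of_le (Finset.le_sup (f := id) hi'))]
    exact (hU i hi').2
  have hfin : u ∈ γ ⁻¹' {γ w} := by rw [← hVeq]; exact hsub hmem
  simpa using hfin

end MyAux

section MyAux2

variable {N : ℕ} {A : Matrix (Fin N) (Fin N) ℕ}

private lemma pt_ext' {u w : ↥(MarkovShift A)} (hc : ∀ i, u.1 i = w.1 i) : u = w :=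
  Subtype.ext (funext hc)

private lemma entry_ne_one (hz : ∀ i j, A i j = 0 ∨ A i j = 1) {i j : Fin N}
    (hne : A i j ≠ 0) : A i j = 1 := (hz i j).resolve_left hne

private lemma exists_succ_sym (hA : IsIrredNonPerm A) (a : Fin N) : ∃ b, A a b = 1 := by
  obtain ⟨n, hn1, hpos⟩ := hA.irreducible a a
  obtain ⟨m, rfl⟩ : ∃ m, n = m + 1 := ⟨n - 1, by omega⟩
  rw [pow_succ', Matrix.mul_apply] at hpos
  obtain ⟨k, -, hk⟩ := Finset.exists_ne_zero_of_sum_ne_zero (Nat.pos_iff_ne_zero.mp hpos)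
  exact ⟨k, entry_ne_one hA.zero_one fun h0 => hk (by rw [h0, zero_mul])⟩

private lemma exists_pred_sym (hA : IsIrredNonPerm A) (c : Fin N) : ∃ k, A k c = 1 := by
  obtain ⟨n, hn1, hpos⟩ := hA.irreducible c c
  obtain ⟨m, rfl⟩ : ∃ m, n = m + 1 := ⟨n - 1, by omega⟩
  rw [pow_succ, Matrix.mul_apply] at hpos
  obtain ⟨k, -, hk⟩ := Finset.exists_ne_zero_of_sum_ne_zero (Nat.pos_iff_ne_zero.mp hpos)
  exact ⟨k, entry_ne_one hA.zero_one fun h0 => hk (by rw [h0, mul_zero])⟩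

private lemma path_of_pow (hz : ∀ i j, A i j = 0 ∨ A i j = 1) :
    ∀ (n : ℕ) (a c : Fin N), 0 < (A ^ n) a c →
      ∃ ρ : ℕ → Fin N, ρ 0 = a ∧ ρ n = c ∧ ∀ i < n, A (ρ i) (ρ (i + 1)) = 1 := by
  intro n
  induction n with
  | zero =>
    intro a c hpos
    rw [pow_zero] at hpos
    have hac : a = c := by
      by_contra hne
      rw [Matrix.one_apply_ne hne] at hpos; omega
    exact ⟨fun _ => a, rfl, hac ▸ rfl, fun i hi => absurd hi (by omega)⟩
  | succ n ih =>
    intro a c hpos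
    rw [pow_succ, Matrix.mul_apply] at hpos
    obtain ⟨k, -, hk⟩ := Finset.exists_ne_zero_of_sum_ne_zero (Nat.pos_iff_ne_zero.mp hpos)
    have h1 : 0 < (A ^ n) a k := Nat.pos_of_ne_zero fun h0 => hk (by rw [h0, zero_mul])
    have h2 : A k c = 1 := entry_ne_one hz fun h0 => hk (by rw [h0, mul_zero])
    obtain ⟨ρ, hρ0, hρn, hρs⟩ := ih a k h1
    refine ⟨fun i => if i ≤ n then ρ i else c, ?_, ?_, ?_⟩
    · beta_reduce; rw [if_pos (Nat.zero_le n)]; exact hρ0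
    · beta_reduce; rw [if_neg (show ¬ (n + 1 ≤ n) by omega)]
    intro i hi
    beta_reduce
    by_cases h3 : i + 1 ≤ n
    · rw [if_pos (by omega), if_pos h3]; exact hρs i (by omega)
    · have h4 : i = n := by omega
      rw [if_pos (show i ≤ n by omega), if_neg (show ¬ (i + 1 ≤ n) by omega), h4, hρn]
      exact h2

private lemma cons_point (a : Fin N) (v : ↥(MarkovShift A)) (ha : A a (v.1 0) = 1) :
    ∃ u : ↥(MarkovShift A), shift A u = v ∧ u.1 0 = a := by
  refine ⟨⟨fun n => match n with | 0 => a | m + 1 => v.1 m, fun n => ?_⟩, ?_, rfl⟩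
  · cases n with
    | zero => exact ha
    | succ m => exact v.2 m
  · exact pt_ext' fun i => rfl

private lemma exists_point_from (hA : IsIrredNonPerm A) (a : Fin N) :
    ∃ v : ↥(MarkovShift A), v.1 0 = a := by
  obtain ⟨f, hf⟩ : ∃ f : Fin N → Fin N, ∀ b, A b (f b) = 1 := by
    choose f hf using exists_succ_sym hA; exact ⟨f, hf⟩
  refine ⟨⟨fun n => f^[n] a, fun n => ?_⟩, rfl⟩
  beta_reduce
  rw [Function.iterate_succ_apply']
  exact hf _

private lemma markov_infinite (hA : IsIrredNonPerm A) : Infinite ↥(MarkovShift A) := by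
  by_contra hinf
  have hfin : Finite ↥(MarkovShift A) := not_infinite_iff_finite.mp hinf
  have hsurj : Function.Surjective (shift A) := by
    intro v
    obtain ⟨k, hk⟩ := exists_pred_sym hA (v.1 0)
    obtain ⟨u, hu, -⟩ := cons_point k v hk
    exact ⟨u, hu⟩
  have hinj : Function.Injective (shift A) := Finite.injective_iff_surjective.mpr hsurj
  have huniq : ∀ (c a a' : Fin N), A a c = 1 → A a' c = 1 → a = a' := by
    intro c a a' ha ha'
    obtain ⟨v, hv⟩ := exists_point_from hA c
    obtain ⟨u, hu, hu0⟩ := cons_point a v (by rw [hv]; exact ha)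
    obtain ⟨u', hu', hu0'⟩ := cons_point a' v (by rw [hv]; exact ha')
    have heq := hinj (hu.trans hu'.symm)
    rw [← hu0, ← hu0', heq]
  obtain ⟨g, hg⟩ : ∃ g : Fin N → Fin N, ∀ c, A (g c) c = 1 := by
    choose g hg using fun c => exists_pred_sym hA c; exact ⟨g, hg⟩
  have hgsurj : Function.Surjective g := by
    intro a
    obtain ⟨b, hb⟩ := exists_succ_sym hA a
    exact ⟨b, huniq b (g b) a (hg b) hb⟩
  have hgbij : Function.Bijective g := ⟨Finite.injective_iff_surjective.mpr hgsurj, hgsurj⟩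
  refine hA.not_perm ⟨(Equiv.ofBijective g hgbij).symm, fun i j => ?_⟩
  by_cases hij : (Equiv.ofBijective g hgbij).symm i = j
  · rw [if_pos hij]
    have h1 : g j = i := by
      have h2 := (Equiv.ofBijective g hgbij).apply_symm_apply i
      rw [hij, Equiv.ofBijective_apply] at h2
      exact h2
    rw [← h1]
    exact hg j
  · rw [if_neg hij]
    rcases hA.zero_one i j with h0 | h1
    · exact h0
    · exfalso
      apply hij
      have h2 : i = g j := huniq j i (g j) h1 (hg j)
      rw [h2, ← Equiv.ofBijective_apply g hgbij, Equiv.symm_apply_apply]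

private def glueF (w : ℕ → Fin N) (v : ↥(MarkovShift A)) (c : ℕ)
    (hw : ∀ q, q + 1 < c → A (w q) (w (q + 1)) = 1)
    (hwv : A (w (c - 1)) (v.1 0) = 1) (hc : 1 ≤ c) : ↥(MarkovShift A) :=
  ⟨fun q => if q < c then w q else v.1 (q - c), by
    intro n
    beta_reduce
    by_cases h1 : n + 1 < c
    · rw [if_pos (by omega), if_pos h1]; exact hw n h1
    · by_cases h2 : n < c
      · have hn : n = c - 1 := by omega
        rw [if_pos h2, if_neg (by omega)]
        have h3 : n + 1 - c = 0 := by omega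
        rw [h3, hn]; exact hwv
      · rw [if_neg h2, if_neg (by omega)]
        have h3 : n + 1 - c = (n - c) + 1 := by omega
        rw [h3]; exact v.2 (n - c)⟩

private lemma glueF_coord (w : ℕ → Fin N) (v : ↥(MarkovShift A)) (c : ℕ) (hw) (hwv) (hc) (q : ℕ) :
    (glueF w v c hw hwv hc).1 q = if q < c then w q else v.1 (q - c) := rfl

private lemma R_iter' {M : ℕ} {B : Matrix (Fin M) (Fin M) ℕ}
    (h : ↥(MarkovShift A) ≃ₜ ↥(MarkovShift B)) (k₁ l₁ : ↥(MarkovShift A) → ℕ)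
    (hrel : ∀ x, (shift B)^[k₁ x] (h (shift A x)) = (shift B)^[l₁ x] (h x)) :
    ∀ (n : ℕ) (u : ↥(MarkovShift A)),
      (shift B)^[∑ i ∈ Finset.range n, k₁ ((shift A)^[i] u)] (h ((shift A)^[n] u)) =
      (shift B)^[∑ i ∈ Finset.range n, l₁ ((shift A)^[i] u)] (h u) := by
  have iter_swap' : ∀ {α : Type} (f : α → α) (a b : ℕ) (x : α),
      f^[a] (f^[b] x) = f^[b] (f^[a] x) := by
    intro α f a b x
    rw [← Function.iterate_add_apply, ← Function.iterate_add_apply, add_comm]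
  intro n u
  induction n with
  | zero => simp
  | succ n ih =>
    have h1 : (shift B)^[k₁ ((shift A)^[n] u)] (h ((shift A)^[n + 1] u)) =
        (shift B)^[l₁ ((shift A)^[n] u)] (h ((shift A)^[n] u)) := by
      rw [Function.iterate_succ_apply']
      exact hrel _
    rw [Finset.sum_range_succ, Finset.sum_range_succ]
    calc (shift B)^[(∑ i ∈ Finset.range n, k₁ ((shift A)^[i] u)) + k₁ ((shift A)^[n] u)]
          (h ((shift A)^[n + 1] u))
        = (shift B)^[∑ i ∈ Finset.range n, k₁ ((shift A)^[i] u)]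
            ((shift B)^[k₁ ((shift A)^[n] u)] (h ((shift A)^[n + 1] u))) :=
          Function.iterate_add_apply _ _ _ _
      _ = (shift B)^[∑ i ∈ Finset.range n, k₁ ((shift A)^[i] u)]
            ((shift B)^[l₁ ((shift A)^[n] u)] (h ((shift A)^[n] u))) := by rw [h1]
      _ = (shift B)^[l₁ ((shift A)^[n] u)]
            ((shift B)^[∑ i ∈ Finset.range n, k₁ ((shift A)^[i] u)] (h ((shift A)^[n] u))) :=
          iter_swap' _ _ _ _
      _ = (shift B)^[l₁ ((shift A)^[n] u)]
            ((shift B)^[∑ i ∈ Finset.range n, l₁ ((shift A)^[i] u)] (h u)) := by rw [ih]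
      _ = (shift B)^[(∑ i ∈ Finset.range n, l₁ ((shift A)^[i] u)) + l₁ ((shift A)^[n] u)]
            (h u) := by rw [iter_swap', ← Function.iterate_add_apply]

end MyAux2

/-- the cocycle sum along an eventual period is positive. -/
theorem cocycle_sum_pos_along_period {N M : ℕ}
    (A : Matrix (Fin N) (Fin N) ℕ) (B : Matrix (Fin M) (Fin M) ℕ)
    (hA : IsIrredNonPerm A) (hB : IsIrredNonPerm B)
    (h : ↥(MarkovShift A) ≃ₜ ↥(MarkovShift B))
    (k₁ l₁ : ↥(MarkovShift A) → ℕ)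
    (hw : ∃ k₂ l₂, COEWitness A B h k₁ l₁ k₂ l₂)
    (x : ↥(MarkovShift A)) (r s : ℕ) (hrs : s < r)
    (hper : (shift A)^[r] x = (shift A)^[s] x) :
    0 < ∑ i ∈ Finset.range (r - s),
        ((l₁ ((shift A)^[s + i] x) : ℤ) - (k₁ ((shift A)^[s + i] x) : ℤ)) := by
  classical
  obtain ⟨k₂, l₂, hck1, hcl1, hck2, hcl2, hrel1, hrel2⟩ := hw
  set p := r - s with hpdef
  have hp : 0 < p := by omega
  set y : ↥(MarkovShift A) := (shift A)^[s] x with hydef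
  have hyper : (shift A)^[p] y = y := by
    rw [hydef, ← Function.iterate_add_apply]
    have hps : p + s = r := by omega
    rw [hps, hper]
  have hterm : ∀ i, (shift A)^[s + i] x = (shift A)^[i] y := by
    intro i
    rw [hydef, ← Function.iterate_add_apply, Nat.add_comm i s]
  set K := ∑ i ∈ Finset.range p, k₁ ((shift A)^[i] y) with hKdef
  set L := ∑ i ∈ Finset.range p, l₁ ((shift A)^[i] y) with hLdef
  have hgoal : (∑ i ∈ Finset.range p,
      ((l₁ ((shift A)^[s + i] x) : ℤ) - (k₁ ((shift A)^[s + i] x) : ℤ))) = (L : ℤ) - K := by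
    have h1 : ∀ i ∈ Finset.range p,
        ((l₁ ((shift A)^[s + i] x) : ℤ) - (k₁ ((shift A)^[s + i] x) : ℤ))
        = ((l₁ ((shift A)^[i] y) : ℤ) - (k₁ ((shift A)^[i] y) : ℤ)) := fun i _ => by
      rw [hterm i]
    rw [Finset.sum_congr rfl h1, Finset.sum_sub_distrib, hLdef, hKdef]
    push_cast
    ring
  rw [hgoal, sub_pos]
  by_contra hKL
  push_neg at hKL
  have hLK : L ≤ K := by exact_mod_cast hKL
  set e := K - L with hedef
  have hKe : K = L + e := by omega
  -- coordinates of y are p-periodic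
  have ycoord : ∀ i, y.1 (i + p) = y.1 i := by
    intro i
    have h1 := shift_coord y p i
    rw [hyper] at h1
    exact h1.symm
  have ycoord_gen : ∀ (j i : ℕ), y.1 (i + j * p) = y.1 i := by
    intro j
    induction j with
    | zero => intro i; simp
    | succ j ih =>
      intro i
      have h1 : i + (j + 1) * p = (i + j * p) + p := by ring
      rw [h1, ycoord, ih]
  have hybd : ∀ t : ℕ, 1 ≤ t → y.1 (t * p - 1) = y.1 (p - 1) := by
    intro t ht
    obtain ⟨t', rfl⟩ : ∃ t', t = t' + 1 := ⟨t - 1, by omega⟩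
    have h1 : (t' + 1) * p = t' * p + p := by ring
    have h2 : (t' + 1) * p - 1 = (p - 1) + t' * p := by omega
    rw [h2, ycoord_gen]
  -- z := h y is eventually periodic in coordinates
  have hzK : ∀ i, (h y).1 (i + K) = (h y).1 (i + L) := by
    have h1 := R_iter' h k₁ l₁ hrel1 p y
    rw [hyper, ← hKdef, ← hLdef] at h1
    intro i
    have h2 := congrArg (fun w : ↥(MarkovShift B) => w.1 i) h1
    simpa [shift_coord] using h2
  have hzper : ∀ (j i : ℕ), (h y).1 (L + i + j * e) = (h y).1 (L + i) := by
    intro j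
    induction j with
    | zero => intro i; simp
    | succ j ih =>
      intro i
      have h1 : L + i + (j + 1) * e = (i + j * e) + K := by rw [hKe]; ring
      rw [h1, hzK (i + j * e)]
      have h3 : (i + j * e) + L = L + i + j * e := by ring
      rw [h3, ih]
  -- local-constancy moduli for k₁ and l₁ at the points of the cycle of y
  obtain ⟨tk, htk⟩ : ∃ tk : ℕ → ℕ, ∀ i, ∀ u : ↥(MarkovShift A),
      (∀ q < tk i, u.1 q = ((shift A)^[i] y).1 q) → k₁ u = k₁ ((shift A)^[i] y) := by
    choose tk htk using fun i => cyl_lemma k₁ hck1 ((shift A)^[i] y)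
    exact ⟨tk, htk⟩
  obtain ⟨tl, htl⟩ : ∃ tl : ℕ → ℕ, ∀ i, ∀ u : ↥(MarkovShift A),
      (∀ q < tl i, u.1 q = ((shift A)^[i] y).1 q) → l₁ u = l₁ ((shift A)^[i] y) := by
    choose tl htl using fun i => cyl_lemma l₁ hcl1 ((shift A)^[i] y)
    exact ⟨tl, htl⟩
  set T₀ := (Finset.range p).sup (fun i => max (tk i) (tl i)) with hT0def
  set b := T₀ + 1 with hbdef
  have hb1 : 1 ≤ b := by omega
  have hbp1 : 1 ≤ b * p := Nat.mul_pos (by omega) hp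
  -- cylinder modulus for h at y
  have hhm : ∀ c : ℕ, ∃ t', ∀ u : ↥(MarkovShift A),
      (∀ q < t', u.1 q = y.1 q) → ∀ q < c, (h u).1 q = (h y).1 q := by
    intro c
    obtain ⟨t', ht'⟩ := cyl_lemma (fun u => (fun q : Fin c => (h u).1 q.1))
      (continuous_pi fun q => (continuous_apply q.1).comp
        (continuous_subtype_val.comp h.continuous)) y
    refine ⟨t', fun u hu q hq => ?_⟩
    exact congrFun (ht' u hu) ⟨q, hq⟩
  obtain ⟨tK, htK⟩ := hhm K
  -- main claim: every point of the cylinder around y maps into the tail-set of h y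
  have hmain : ∀ u : ↥(MarkovShift A), (∀ q < b * p, u.1 q = y.1 q) →
      ∀ i, (h u).1 ((L + tK * e) + i) = (h y).1 ((L + tK * e) + i) := by
    intro u hu i
    set v : ↥(MarkovShift A) := (shift A)^[b * p] u with hvdef
    have hv0 : v.1 0 = u.1 (b * p) := by rw [hvdef, shift_coord, Nat.zero_add]
    have hvbd : A (y.1 (p - 1)) (v.1 0) = 1 := by
      have h1 := u.2 (b * p - 1)
      have h2 : b * p - 1 + 1 = b * p := by omega
      rw [h2] at h1
      have h3 : u.1 (b * p - 1) = y.1 (b * p - 1) := hu _ (by omega)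
      rw [h3, hybd b hb1] at h1
      rw [hv0]
      exact h1
    set F : ℕ → ↥(MarkovShift A) := fun n =>
      glueF y.1 v ((b + n) * p) (fun q _ => y.2 q)
        (by rw [hybd (b + n) (by omega)]; exact hvbd)
        (Nat.mul_pos (by omega) hp) with hFdef
    have hFcoord : ∀ n q, (F n).1 q
        = if q < (b + n) * p then y.1 q else v.1 (q - (b + n) * p) := by
      intro n q
      rw [hFdef]
      beta_reduce
      rfl
    have hFy : ∀ n q, q < (b + n) * p → (F n).1 q = y.1 q := by
      intro n q hq
      rw [hFcoord, if_pos hq]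
    have hFstep : ∀ n, (shift A)^[p] (F (n + 1)) = F n := by
      intro n
      apply pt_ext
      intro i
      rw [shift_coord, hFcoord, hFcoord]
      have h1 : (b + (n + 1)) * p = (b + n) * p + p := by ring
      by_cases h2 : i < (b + n) * p
      · rw [if_pos (by omega), if_pos h2]
        exact ycoord i
      · rw [if_neg (by omega), if_neg h2]
        have h4 : i + p - (b + (n + 1)) * p = i - (b + n) * p := by omega
        rw [h4]
    have hagreeF : ∀ (n i : ℕ), i < p → ∀ q, q < max (tk i) (tl i) →
        ((shift A)^[i] (F (n + 1))).1 q = ((shift A)^[i] y).1 q := by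
      intro n i hi q hq
      rw [shift_coord, shift_coord]
      apply hFy
      have h1 : max (tk i) (tl i) ≤ T₀ :=
        Finset.le_sup (f := fun i => max (tk i) (tl i)) (Finset.mem_range.mpr hi)
      have h2 : (b + (n + 1)) * p = b * p + (n + 1) * p := by ring
      have h3 : b ≤ b * p := Nat.le_mul_of_pos_right b hp
      have h4 : p * (n + 1) = (n + 1) * p := by ring
      have h5 : p ≤ p * (n + 1) := Nat.le_mul_of_pos_right p (by omega)
      omega
    have hsumk : ∀ n, ∑ i ∈ Finset.range p, k₁ ((shift A)^[i] (F (n + 1))) = K := by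
      intro n
      rw [hKdef]
      refine Finset.sum_congr rfl fun i hi => ?_
      exact htk i _ (fun q hq => hagreeF n i (Finset.mem_range.mp hi) q
        (lt_of_lt_of_le hq (le_max_left _ _)))
    have hsuml : ∀ n, ∑ i ∈ Finset.range p, l₁ ((shift A)^[i] (F (n + 1))) = L := by
      intro n
      rw [hLdef]
      refine Finset.sum_congr rfl fun i hi => ?_
      exact htl i _ (fun q hq => hagreeF n i (Finset.mem_range.mp hi) q
        (lt_of_lt_of_le hq (le_max_right _ _)))
    have hstep : ∀ n i, (h (F n)).1 (i + K) = (h (F (n + 1))).1 (i + L) := by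
      intro n i
      have h1 := R_iter' h k₁ l₁ hrel1 p (F (n + 1))
      rw [hFstep n, hsumk n, hsuml n] at h1
      have h2 := congrArg (fun w : ↥(MarkovShift B) => w.1 i) h1
      simpa [shift_coord] using h2
    have hchain : ∀ (j n i : ℕ), (h (F n)).1 (L + i + j * e) = (h (F (n + j))).1 (L + i) := by
      intro j
      induction j with
      | zero => intro n i; simp
      | succ j ih =>
        intro n i
        have h1 : L + i + (j + 1) * e = (i + j * e) + K := by rw [hKe]; ring
        rw [h1, hstep n (i + j * e)]
        have h2 : (i + j * e) + L = L + i + j * e := by ring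
        rw [h2, ih (n + 1) i]
        have h3 : n + 1 + j = n + (j + 1) := by omega
        rw [h3]
    have hagreeH : ∀ (c t' : ℕ),
        (∀ u' : ↥(MarkovShift A), (∀ q < t', u'.1 q = y.1 q) →
          ∀ q < c, (h u').1 q = (h y).1 q) →
        ∀ n, t' ≤ n → ∀ q, q < c → (h (F n)).1 q = (h y).1 q := by
      intro c t' ht' n hn q hq
      refine ht' (F n) (fun q' hq' => hFy n q' ?_) q hq
      have h3 : b + n ≤ (b + n) * p := Nat.le_mul_of_pos_right _ hp
      omega
    have hF0u : F 0 = u := by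
      apply pt_ext
      intro q
      rw [hFcoord]
      have hb0 : (b + 0) * p = b * p := by ring
      by_cases hq : q < (b + 0) * p
      · rw [if_pos hq]
        exact (hu q (by omega)).symm
      · rw [if_neg hq, hvdef, shift_coord]
        have h4 : (q - (b + 0) * p) + b * p = q := by omega
        rw [h4]
    rcases Nat.eq_zero_or_pos e with he0 | hepos
    · -- e = 0
      obtain ⟨t', ht'⟩ := hhm ((L + tK * e) + i + 1)
      have htKe : tK * e = 0 := by rw [he0, mul_zero]
      have ht'e : t' * e = 0 := by rw [he0, mul_zero]
      calc (h u).1 ((L + tK * e) + i)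
          = (h (F 0)).1 (L + i + t' * e) := by
            rw [hF0u]
            have h4 : (L + tK * e) + i = L + i + t' * e := by omega
            rw [h4]
        _ = (h (F (0 + t'))).1 (L + i) := hchain t' 0 i
        _ = (h y).1 (L + i) := by
            rw [Nat.zero_add]
            exact hagreeH _ t' ht' t' le_rfl _ (by omega)
        _ = (h y).1 ((L + tK * e) + i) := by
            have h4 : L + i = (L + tK * e) + i := by omega
            rw [h4]
    · -- e ≥ 1
      set io := tK * e + i with hiodef
      set j := io / e with hjdef
      set rr := io % e with hrrdef
      have hdm : e * j + rr = io := Nat.div_add_mod io e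
      have hrre : rr < e := Nat.mod_lt _ hepos
      have hjJ : tK ≤ j := by
        rw [hjdef]
        exact (Nat.le_div_iff_mul_le hepos).mpr (by omega)
      have hcomm : j * e = e * j := by ring
      calc (h u).1 ((L + tK * e) + i)
          = (h (F 0)).1 (L + rr + j * e) := by
            rw [hF0u]
            have h4 : (L + tK * e) + i = L + rr + j * e := by omega
            rw [h4]
        _ = (h (F (0 + j))).1 (L + rr) := hchain j 0 rr
        _ = (h y).1 (L + rr) := by
            rw [Nat.zero_add]
            exact hagreeH K tK htK j hjJ _ (by omega)
        _ = (h y).1 (L + rr + j * e) := (hzper j rr).symm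
        _ = (h y).1 ((L + tK * e) + i) := by
            have h4 : L + rr + j * e = (L + tK * e) + i := by omega
            rw [h4]
  set T := L + tK * e with hTdef
  -- the tail set is finite
  have hSfin : Finite ↥{ξ : ↥(MarkovShift B) | ∀ i, ξ.1 (T + i) = (h y).1 (T + i)} := by
    refine Finite.of_injective (fun ξ => (fun i : Fin T => (ξ.1).1 i.1)) ?_
    intro ξ ξ' hξ
    apply Subtype.ext
    apply pt_ext
    intro q
    by_cases hq : q < T
    · exact congrFun hξ ⟨q, hq⟩
    · have h1 := ξ.2 (q - T)
      have h2 := ξ'.2 (q - T)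
      have h3 : T + (q - T) = q := by omega
      rw [h3] at h1 h2
      rw [h1, h2]
  -- the cylinder around y is infinite
  obtain ⟨a, ha⟩ : ∃ a : Fin N, {v : ↥(MarkovShift A) | v.1 0 = a}.Infinite := by
    by_contra hc
    push_neg at hc
    have hfin : ∀ a : Fin N, {v : ↥(MarkovShift A) | v.1 0 = a}.Finite :=
      fun a => hc a
    have huniv : (Set.univ : Set ↥(MarkovShift A)) ⊆ ⋃ a : Fin N, {v | v.1 0 = a} :=
      fun v _ => Set.mem_iUnion.mpr ⟨v.1 0, rfl⟩
    have h1 : (Set.univ : Set ↥(MarkovShift A)).Finite :=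
      Set.Finite.subset (Set.finite_iUnion hfin) huniv
    haveI h2 : Finite ↥(MarkovShift A) := Set.finite_univ_iff.mp h1
    haveI h3 := markov_infinite hA
    exact not_finite ↥(MarkovShift A)
  obtain ⟨n₁, hn₁, hn₁pos⟩ := hA.irreducible (y.1 (p - 1)) a
  obtain ⟨ρ, hρ0, hρn, hρs⟩ := path_of_pow hA.zero_one n₁ _ _ hn₁pos
  set c₂ := b * p + (n₁ - 1) with hc₂def
  set w₂ : ℕ → Fin N := fun q => if q < b * p then y.1 q else ρ (q - b * p + 1) with hw₂def
  have hw₂y : ∀ q, q < b * p → w₂ q = y.1 q := by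
    intro q hq
    rw [hw₂def]
    beta_reduce
    rw [if_pos hq]
  have hw₂trans : ∀ q, q + 1 < c₂ → A (w₂ q) (w₂ (q + 1)) = 1 := by
    intro q hq
    by_cases h1 : q + 1 < b * p
    · rw [hw₂def]
      beta_reduce
      rw [if_pos (by omega), if_pos h1]
      exact y.2 q
    · by_cases h2 : q < b * p
      · rw [hw₂def]
        beta_reduce
        rw [if_pos h2, if_neg h1]
        have h3 : q = b * p - 1 := by omega
        have h4 : q + 1 - b * p + 1 = 1 := by omega
        rw [h4, h3, hybd b hb1, ← hρ0]
        exact hρs 0 (by omega)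
      · rw [hw₂def]
        beta_reduce
        rw [if_neg h2, if_neg h1]
        have h3 : q + 1 - b * p + 1 = (q - b * p + 1) + 1 := by omega
        rw [h3]
        exact hρs _ (by omega)
  have hw₂last : w₂ (c₂ - 1) = ρ (n₁ - 1) := by
    rw [hw₂def]
    beta_reduce
    by_cases h1 : n₁ = 1
    · rw [if_pos (by omega), show c₂ - 1 = b * p - 1 from by omega, hybd b hb1,
        show n₁ - 1 = 0 from by omega]
      exact hρ0.symm
    · rw [if_neg (by omega)]
      have h4 : c₂ - 1 - b * p + 1 = n₁ - 1 := by omega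
      rw [h4]
  have hbdry : ∀ v' : ↥(MarkovShift A), v'.1 0 = a → A (w₂ (c₂ - 1)) (v'.1 0) = 1 := by
    intro v' hv'
    rw [hv', hw₂last, ← hρn]
    have h1 := hρs (n₁ - 1) (by omega)
    rw [show n₁ - 1 + 1 = n₁ from by omega] at h1
    exact h1
  have hc₂1 : 1 ≤ c₂ := by omega
  have hCinf : {u : ↥(MarkovShift A) | ∀ q < b * p, u.1 q = y.1 q}.Infinite := by
    haveI : Infinite ↥{v : ↥(MarkovShift A) | v.1 0 = a} := Set.infinite_coe_iff.mpr ha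
    refine Set.infinite_of_injective_forall_mem
      (f := fun vv : ↥{v : ↥(MarkovShift A) | v.1 0 = a} =>
        glueF w₂ vv.1 c₂ hw₂trans (hbdry vv.1 vv.2) hc₂1) ?_ ?_
    · intro vv vv' hvv
      apply Subtype.ext
      apply pt_ext
      intro i
      have h1 := congrArg (fun z : ↥(MarkovShift A) => z.1 (c₂ + i)) hvv
      simp only [glueF_coord] at h1
      rw [if_neg (by omega), if_neg (by omega)] at h1
      have h2 : c₂ + i - c₂ = i := by omega
      rw [h2] at h1
      exact h1
    · intro vv
      intro q hq
      rw [glueF_coord, if_pos (by omega)]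
      exact hw₂y q hq
  -- final contradiction
  haveI hI : Infinite ↥{u : ↥(MarkovShift A) | ∀ q < b * p, u.1 q = y.1 q} :=
    Set.infinite_coe_iff.mpr hCinf
  haveI hJ2 := hSfin
  have hinj2 : Function.Injective
      (fun uu : ↥{u : ↥(MarkovShift A) | ∀ q < b * p, u.1 q = y.1 q} =>
        (⟨h uu.1, fun i => hmain uu.1 uu.2 i⟩ :
          ↥{ξ : ↥(MarkovShift B) | ∀ i, ξ.1 (T + i) = (h y).1 (T + i)})) := by
    intro uu uu' huu
    apply Subtype.ext
    have h1 : h uu.1 = h uu'.1 := congrArg Subtype.val huu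
    exact h.injective h1
  haveI := Finite.of_injective _ hinj2
  exact not_finite ↥{u : ↥(MarkovShift A) | ∀ q < b * p, u.1 q = y.1 q}
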